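/- (Second-order HOCBF with linear class K functions.) Let ψ : ℝ → ℝ be twice differentiable. If ψ(0) ≥ 0, ψ'(0) + ψ(0) ≥ 0, and ψ''(t) + 2ψ'(t) + ψ(t) ≥ 0 for all t ≥ 0, then ψ(t) ≥ 0 and ψ'(t) + ψ(t) ≥ 0 for all t ≥ 0. -/

import Mathlib

lemma aux_exp_pos (f : ℝ → ℝ) (hf : Differentiable ℝ f) (h0 : f 0 ≥ 0)
    (h : ∀ t, 0 ≤ t → deriv f t + f t ≥ 0) : ∀ t, 0 ≤ t → f t ≥ 0 := by
  intro t ht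
  have key : MonotoneOn (fun s => Real.exp s * f s) (Set.Ici (0:ℝ)) := by
    apply monotoneOn_of_deriv_nonneg (convex_Ici 0)
    · exact (Real.continuous_exp.mul hf.continuous).continuousOn
    · exact (Real.differentiable_exp.mul hf).differentiableOn.mono interior_subset
    · intro x hx
      rw [interior_Ici] at hx
      rw [deriv_fun_mul (Real.differentiable_exp x) (hf x), Real.deriv_exp]
      have := h x hx.le
      nlinarith [Real.exp_pos x, this]
  have h2 := key (Set.self_mem_Ici) (Set.mem_Ici.mpr ht) ht
  simp only [Real.exp_zero, one_mul] at h2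
  have hep := Real.exp_pos t
  nlinarith

theorem hocbf_second_order_linear
    (ψ : ℝ → ℝ)
    (hψ : Differentiable ℝ ψ) (hψ' : Differentiable ℝ (deriv ψ))
    (h0 : ψ 0 ≥ 0)
    (h1 : deriv ψ 0 + ψ 0 ≥ 0)
    (hconstr : ∀ t : ℝ, 0 ≤ t →
      deriv (deriv ψ) t + 2 * deriv ψ t + ψ t ≥ 0) :
    ∀ t : ℝ, 0 ≤ t → ψ t ≥ 0 ∧ deriv ψ t + ψ t ≥ 0 := by
  have hφd : Differentiable ℝ (fun s => deriv ψ s + ψ s) := hψ'.add hψ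
  have hφderiv : ∀ x, deriv (fun s => deriv ψ s + ψ s) x = deriv (deriv ψ) x + deriv ψ x := by
    intro x
    rw [deriv_fun_add (hψ' x) (hψ x)]
  have hφ : ∀ t, 0 ≤ t → deriv ψ t + ψ t ≥ 0 := by
    apply aux_exp_pos _ hφd h1
    intro t ht
    rw [hφderiv]
    have := hconstr t ht
    linarith
  intro t ht
  refine ⟨?_, hφ t ht⟩
  exact aux_exp_pos ψ hψ h0 (fun s hs => hφ s hs) t ht
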